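/- Let A be a set and M : A → A → A → ℝ≥0 a Frobenius algebra in the category of nonnegative-real matrices with ℓ²-summable rows and columns, i.e. satisfying the ℓ²-summability conditions and axioms (M), (C), (A), (F) as in the context. Then axiom (H) holds: there exists star : A → A such that M (star a) b c = M a c b for all a, b, c ∈ A. -/

import Mathlib

open scoped NNReal Classical

private lemma l2matH_exN {ι : Type*} {f : ι → ℝ≥0} (h : (∑' i, f i) ≠ 0) :
    ∃ i, f i ≠ 0 := by
  by_contra hc
  push_neg at hc
  apply h
  calc (∑' i, f i) = ∑' _ : ι, (0 : ℝ≥0) := tsum_congr hc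
  _ = 0 := tsum_zero

private lemma l2matH_mul_self_cancel {a b : ℝ≥0} (h : a * a = b * b) : a = b := by
  have h2 := congrArg NNReal.sqrt h
  rwa [NNReal.sqrt_mul_self, NNReal.sqrt_mul_self] at h2

private lemma l2matH_Mzero {A : Type*} (M : A → A → A → ℝ≥0)
    (uniq : ∀ {x y z z' : A}, M x y z ≠ 0 → M x y z' ≠ 0 → z = z')
    {x y u₀ : A} (h : M x y u₀ ≠ 0) (u : A) (hu : u ≠ u₀) : M x y u = 0 := by
  by_contra h'
  exact hu (uniq h' h)

/-- The key lemma: if `s a = e` and `e a = a` (with nonzero weights), then for every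
`c, b` with `M a c b ≠ 0` we get `M s b c = M a c b`. -/
private lemma l2matH_main {A : Type*} (M : A → A → A → ℝ≥0)
    (uniq : ∀ {x y z z' : A}, M x y z ≠ 0 → M x y z' ≠ 0 → z = z')
    (hC : ∀ a b c : A, M a b c = M b a c)
    (hA : ∀ a b c z : A, (∑' w : A, M a b w * M w c z) = ∑' w : A, M b c w * M a w z)
    (hF : ∀ a b c d : A, (∑' e : A, M a b e * M c d e) = ∑' b₁ : A, M b₁ d b * M a b₁ c)
    (a s e : A) (hsa : M s a e ≠ 0) (hea : M e a a ≠ 0) :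
    ∀ c b : A, M a c b ≠ 0 → M s b c = M a c b := by
  have has : M a s e ≠ 0 := by rw [hC a s e]; exact hsa
  have hae : M a e a ≠ 0 := by rw [hC a e a]; exact hea
  -- `e e = e` with weight `M e a a`
  have L1 : (∑' u, M e a u * M u s e) = M e a a * M a s e :=
    tsum_eq_single a fun u hu => by rw [l2matH_Mzero M uniq hea u hu, zero_mul]
  have R1 : (∑' u, M a s u * M e u e) = M a s e * M e e e :=
    tsum_eq_single e fun u hu => by rw [l2matH_Mzero M uniq has u hu, zero_mul]
  have h1 := (L1.symm.trans (hA e a s e)).trans R1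
  have hee : M e e e = M e a a := by
    rw [mul_comm (M e a a)] at h1
    exact (mul_left_cancel₀ has h1).symm
  have hee0 : M e e e ≠ 0 := by rw [hee]; exact hea
  -- units of `a` are absorbed by `e`
  have step2 : ∀ w, M a w a ≠ 0 → M e w e = M a w a := by
    intro w hw
    have L : (∑' u, M s a u * M u w e) = M s a e * M e w e :=
      tsum_eq_single e fun u hu => by rw [l2matH_Mzero M uniq hsa u hu, zero_mul]
    have R : (∑' u, M a w u * M s u e) = M a w a * M s a e :=
      tsum_eq_single a fun u hu => by rw [l2matH_Mzero M uniq hw u hu, zero_mul]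
    have h := (L.symm.trans (hA s a w e)).trans R
    rw [mul_comm (M a w a)] at h
    exact mul_left_cancel₀ hsa h
  -- units of `a` fix everything in the range of `e`
  have step3 : ∀ w, M a w a ≠ 0 → ∀ c' u', M e c' u' ≠ 0 → M w u' u' = M a w a := by
    intro w hw c' u' hecu
    have hwe : M w e e ≠ 0 := by rw [hC w e e, step2 w hw]; exact hw
    have L : (∑' u, M w e u * M u c' u') = M w e e * M e c' u' :=
      tsum_eq_single e fun u hu => by rw [l2matH_Mzero M uniq hwe u hu, zero_mul]
    have R : (∑' u, M e c' u * M w u u') = M e c' u' * M w u' u' :=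
      tsum_eq_single u' fun u hu => by rw [l2matH_Mzero M uniq hecu u hu, zero_mul]
    have h := (L.symm.trans (hA w e c' u')).trans R
    rw [mul_comm (M e c' u')] at h
    have h4 := mul_right_cancel₀ hecu h
    rw [← h4, hC w e e]
    exact step2 w hw
  -- weights lemma
  have stepW : ∀ c b : A, M a c b ≠ 0 → M e c c = M e a a ∧ M a c b = M e a a := by
    intro c b hacb
    have L : (∑' u, M a e u * M u c b) = M a e a * M a c b :=
      tsum_eq_single a fun u hu => by rw [l2matH_Mzero M uniq hae u hu, zero_mul]
    have h := L.symm.trans (hA a e c b)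
    have hne : (∑' u, M e c u * M a u b) ≠ 0 := by
      rw [← h]; exact mul_ne_zero hae hacb
    obtain ⟨c₁, hc₁'⟩ := l2matH_exN hne
    have hec₁ : M e c c₁ ≠ 0 := left_ne_zero_of_mul hc₁'
    have hac₁ : M a c₁ b ≠ 0 := right_ne_zero_of_mul hc₁'
    have hcc : c = c₁ := by
      have L2 : (∑' u, M a c u * M a c₁ u) = M a c b * M a c₁ b :=
        tsum_eq_single b fun u hu => by rw [l2matH_Mzero M uniq hacb u hu, zero_mul]
      have h2 := L2.symm.trans (hF a c a c₁)
      have hne2 : (∑' w, M w c₁ c * M a w a) ≠ 0 := by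
        rw [← h2]; exact mul_ne_zero hacb hac₁
      obtain ⟨w, hw'⟩ := l2matH_exN hne2
      have hw1 : M w c₁ c ≠ 0 := left_ne_zero_of_mul hw'
      have hw2 : M a w a ≠ 0 := right_ne_zero_of_mul hw'
      have h3 : M w c₁ c₁ = M a w a := step3 w hw2 c c₁ hec₁
      exact uniq hw1 (by rw [h3]; exact hw2)
    subst hcc
    have R : (∑' u, M e c u * M a u b) = M e c c * M a c b :=
      tsum_eq_single c fun u hu => by rw [l2matH_Mzero M uniq hec₁ u hu, zero_mul]
    have hecc_val : M e c c = M a e a := (mul_right_cancel₀ hacb (h.trans R)).symm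
    -- the W argument: all weights in row `a` equal `M a e a`
    have hW : ∀ c' b', M a c' b' ≠ 0 → M e c' c' ≠ 0 →
        M a c' b' * M a c' b' = ∑' w, M a w a * M a w a := by
      intro c' b' h1' h2'
      have L3 : (∑' u, M a c' u * M a c' u) = M a c' b' * M a c' b' :=
        tsum_eq_single b' fun u hu => by rw [l2matH_Mzero M uniq h1' u hu, zero_mul]
      have h3 := L3.symm.trans (hF a c' a c')
      rw [h3]
      refine tsum_congr fun w => ?_
      by_cases hw : M a w a = 0
      · rw [hw, mul_zero, mul_zero]
      · rw [step3 w hw c' c' h2']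
    have hacb_val : M a c b = M a e a := by
      have hb := hW c b hacb hec₁
      have he' := hW e a hae hee0
      exact l2matH_mul_self_cancel (hb.trans he'.symm)
    exact ⟨hecc_val.trans (hC a e a), hacb_val.trans (hC a e a)⟩
  -- conclusion
  intro c b hacb
  obtain ⟨hecc, hacb_val⟩ := stepW c b hacb
  obtain ⟨-, has_val⟩ := stepW s e has
  have L : (∑' u, M s a u * M u c c) = M s a e * M e c c :=
    tsum_eq_single e fun u hu => by rw [l2matH_Mzero M uniq hsa u hu, zero_mul]
  have R : (∑' u, M a c u * M s u c) = M a c b * M s b c :=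
    tsum_eq_single b fun u hu => by rw [l2matH_Mzero M uniq hacb u hu, zero_mul]
  have h := (L.symm.trans (hA s a c c)).trans R
  rw [hC s a e, has_val, hecc, hacb_val] at h
  rw [hacb_val]
  exact (mul_left_cancel₀ hea h).symm

/-- Every Frobenius algebra in the category of nonnegative-real matrices with
ℓ²-summable rows and columns satisfies axiom (H). -/
theorem l2mat_frobenius_satisfies_H {A : Type*} (M : A → A → A → ℝ≥0)
    (hrow : ∀ a : A, Summable (fun p : A × A => (M p.1 p.2 a) ^ 2))
    (hcol : ∀ x y : A, Summable (fun c : A => (M x y c) ^ 2))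
    (hM : ∀ a a' : A, HasSum (fun p : A × A => M p.1 p.2 a * M p.1 p.2 a')
      (if a = a' then 1 else 0))
    (hC : ∀ a b c : A, M a b c = M b a c)
    (hA : ∀ a b c z : A, (∑' w : A, M a b w * M w c z) = ∑' w : A, M b c w * M a w z)
    (hF : ∀ a b c d : A, (∑' e : A, M a b e * M c d e) = ∑' b₁ : A, M b₁ d b * M a b₁ c) :
    ∃ star : A → A, ∀ a b c : A, M (star a) b c = M a c b := by
  classical
  -- the product of two basis vectors is supported on at most one basis vector
  have uniq : ∀ {x y z z' : A}, M x y z ≠ 0 → M x y z' ≠ 0 → z = z' := by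
    intro x y z z' h1 h2
    by_contra hne
    have h0 := hM z z'
    rw [if_neg hne] at h0
    have h3 := h0.summable.tsum_eq_zero_iff.mp h0.tsum_eq (x, y)
    rcases mul_eq_zero.mp h3 with h | h
    · exact h1 h
    · exact h2 h
  have hstar : ∀ a : A, ∃ s : A, ∀ b c : A, M s b c = M a c b := by
    intro a
    -- factor `a`
    have h1 : (∑' p : A × A, M p.1 p.2 a * M p.1 p.2 a) = 1 := by
      simpa using (hM a a).tsum_eq
    have hne1 : (∑' p : A × A, M p.1 p.2 a * M p.1 p.2 a) ≠ 0 := by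
      rw [h1]; exact one_ne_zero
    obtain ⟨⟨x, y⟩, hp⟩ := l2matH_exN hne1
    have hxy : M x y a ≠ 0 := left_ne_zero_of_mul hp
    -- get a middle unit `e`
    have L : (∑' u, M x y u * M x y u) = M x y a * M x y a :=
      tsum_eq_single a fun u hu => by rw [l2matH_Mzero M uniq hxy u hu, zero_mul]
    have hne2 : (∑' w, M w y y * M x w x) ≠ 0 := by
      rw [← hF x y x y, L]; exact mul_ne_zero hxy hxy
    obtain ⟨e, he'⟩ := l2matH_exN hne2
    have hey : M e y y ≠ 0 := left_ne_zero_of_mul he'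
    have hye : M y e y ≠ 0 := by rw [hC y e y]; exact hey
    -- `e` is a unit for `a`
    have L2 : (∑' u, M x y u * M u e a) = M x y a * M a e a :=
      tsum_eq_single a fun u hu => by rw [l2matH_Mzero M uniq hxy u hu, zero_mul]
    have R2 : (∑' u, M y e u * M x u a) = M y e y * M x y a :=
      tsum_eq_single y fun u hu => by rw [l2matH_Mzero M uniq hye u hu, zero_mul]
    have h2 := (L2.symm.trans (hA x y e a)).trans R2
    have haea : M a e a ≠ 0 := by
      intro h0
      rw [h0, mul_zero] at h2
      exact mul_ne_zero hye hxy h2.symm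
    have hea : M e a a ≠ 0 := by rw [hC e a a]; exact haea
    -- get a pseudo-inverse `s₁`
    have L3 : (∑' u, M a e u * M e a u) = M a e a * M e a a :=
      tsum_eq_single a fun u hu => by rw [l2matH_Mzero M uniq haea u hu, zero_mul]
    have hne3 : (∑' w, M w a e * M a w e) ≠ 0 := by
      rw [← hF a e e a, L3]; exact mul_ne_zero haea hea
    obtain ⟨s₁, hs₁'⟩ := l2matH_exN hne3
    have hs₁ : M s₁ a e ≠ 0 := left_ne_zero_of_mul hs₁'
    have has₁ : M a s₁ e ≠ 0 := by rw [hC a s₁ e]; exact hs₁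
    -- `e e = e`
    have L4 : (∑' u, M e a u * M u s₁ e) = M e a a * M a s₁ e :=
      tsum_eq_single a fun u hu => by rw [l2matH_Mzero M uniq hea u hu, zero_mul]
    have R4 : (∑' u, M a s₁ u * M e u e) = M a s₁ e * M e e e :=
      tsum_eq_single e fun u hu => by rw [l2matH_Mzero M uniq has₁ u hu, zero_mul]
    have h4 := (L4.symm.trans (hA e a s₁ e)).trans R4
    have hee : M e e e = M e a a := by
      rw [mul_comm (M e a a)] at h4
      exact (mul_left_cancel₀ has₁ h4).symm
    have hee0 : M e e e ≠ 0 := by rw [hee]; exact hea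
    -- the canonical pseudo-inverse `s := e s₁`
    have R5 : (∑' u, M s₁ a u * M e u e) = M s₁ a e * M e e e :=
      tsum_eq_single e fun u hu => by rw [l2matH_Mzero M uniq hs₁ u hu, zero_mul]
    have hne5 : (∑' u, M e s₁ u * M u a e) ≠ 0 := by
      rw [hA e s₁ a e, R5]; exact mul_ne_zero hs₁ hee0
    obtain ⟨s, hs'⟩ := l2matH_exN hne5
    have hes : M e s₁ s ≠ 0 := left_ne_zero_of_mul hs'
    have hsa : M s a e ≠ 0 := right_ne_zero_of_mul hs'
    -- `e s = s`
    have L6 : (∑' u, M e e u * M u s₁ s) = M e e e * M e s₁ s :=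
      tsum_eq_single e fun u hu => by rw [l2matH_Mzero M uniq hee0 u hu, zero_mul]
    have R6 : (∑' u, M e s₁ u * M e u s) = M e s₁ s * M e s s :=
      tsum_eq_single s fun u hu => by rw [l2matH_Mzero M uniq hes u hu, zero_mul]
    have h6 := (L6.symm.trans (hA e e s₁ s)).trans R6
    have hess0 : M e s s ≠ 0 := by
      have heq : M e e e = M e s s := by
        rw [mul_comm (M e e e)] at h6
        exact mul_left_cancel₀ hes h6
      rw [← heq]; exact hee0
    refine ⟨s, fun b c => ?_⟩
    by_cases hcase : M a c b = 0
    · by_cases hcase2 : M s b c = 0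
      · rw [hcase, hcase2]
      · have has' : M a s e ≠ 0 := by rw [hC a s e]; exact hsa
        exact (l2matH_main M uniq hC hA hF s a e has' hess0 b c hcase2).symm
    · exact l2matH_main M uniq hC hA hF a s e hsa hea c b hcase
  choose star hstar' using hstar
  exact ⟨star, fun a b c => hstar' a b c⟩
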